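/- Let X be a Banach space and k ∈ ℕ with k ≤ dim X. Then the map T ↦ V_k(T) is continuous on B(X) (with the operator norm topology), and it is submultiplicative: V_k(TS) ≤ V_k(T) V_k(S) for every T, S ∈ B(X). -/

import Mathlib

open Filter MeasureTheory Metric Topology Set

noncomputable section
namespace QCDS

variable {𝕜 : Type*} [RCLike 𝕜]
variable {X : Type*} [NormedAddCommGroup X] [NormedSpace 𝕜 X]
variable {M : Type*} [MetricSpace M]

def cocycle (f : M → M) (A : M → X →L[𝕜] X) : ℕ → M → X →L[𝕜] X
  | 0, _ => 1
  | n + 1, x => (cocycle f A n (f x)).comp (A x)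

def IsHolder (A : M → X →L[𝕜] X) (α : ℝ) : Prop :=
  ∃ C > 0, ∀ x y : M, ‖A x - A y‖ ≤ C * dist x y ^ α

def ClosingProperty (f : M → M) : Prop :=
  ∃ c > 0, ∃ θ > 0, ∃ l : ℕ, 0 < l ∧
    ∀ x : M, ∀ n : ℕ, ∃ j ≤ l, ∃ p : M, f^[n + j] p = p ∧
      ∀ i ≤ n, dist (f^[i] x) (f^[i] p) ≤
        c * Real.exp (-θ * min (i : ℝ) ((n : ℝ) - (i : ℝ))) * dist (f^[n] x) x

def icNorm (T : X →L[𝕜] X) : ℝ :=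
  sInf { r : ℝ | 0 < r ∧ ∃ s : Finset X, ⇑T '' ball (0 : X) 1 ⊆ ⋃ c ∈ s, ball c r }

def essSpecRadius (T : X →L[𝕜] X) : ℝ :=
  ⨅ m : ℕ, icNorm (T ^ (m + 1)) ^ (((m : ℝ) + 1)⁻¹)

def specRadius (T : X →L[𝕜] X) : ℝ :=
  ⨅ m : ℕ, ‖T ^ (m + 1)‖ ^ (((m : ℝ) + 1)⁻¹)

def IsQuasiCompactOp (T : X →L[𝕜] X) : Prop := essSpecRadius T < specRadius T

def algMult (T : X →L[𝕜] X) (γ : 𝕜) : Cardinal :=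
  Module.rank 𝕜 ↥(⨆ j : ℕ, LinearMap.ker (((T - γ • (1 : X →L[𝕜] X)) ^ j : X →L[𝕜] X) : X →ₗ[𝕜] X))

def HasExceptionalPrefix (T : X →L[𝕜] X) (m : ℕ) (lo hi : ℕ → ℝ) : Prop :=
  ∃ γ : Fin m → 𝕜,
    (∀ i : Fin m, lo i ≤ ‖γ i‖ ∧ ‖γ i‖ ≤ hi i) ∧
    (∀ i j : Fin m, i ≤ j → ‖γ j‖ ≤ ‖γ i‖) ∧
    (∀ i : Fin m, essSpecRadius T < ‖γ i‖) ∧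
    (∀ i : Fin m, LinearMap.ker ((T - γ i • (1 : X →L[𝕜] X) : X →L[𝕜] X) : X →ₗ[𝕜] X) ≠ ⊥) ∧
    (∀ z : 𝕜, ((Finset.univ.filter fun i => γ i = z).card : Cardinal) ≤ algMult T z) ∧
    (∀ z : 𝕜, LinearMap.ker ((T - z • (1 : X →L[𝕜] X) : X →L[𝕜] X) : X →ₗ[𝕜] X) ≠ ⊥ → essSpecRadius T < ‖z‖ →
      (∃ i : Fin m, ‖γ i‖ < ‖z‖) →
      ((Finset.univ.filter fun i => γ i = z).card : Cardinal) = algMult T z)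

def ConstantPeriodicData (f : M → M) (A : M → X →L[𝕜] X) (m : ℕ) (lam : ℕ → ℝ) : Prop :=
  ∀ n : ℕ, 0 < n → ∀ p : M, f^[n] p = p →
    IsQuasiCompactOp (cocycle f A n p) ∧
    HasExceptionalPrefix (cocycle f A n p) m
      (fun i => Real.exp (n * lam i)) (fun i => Real.exp (n * lam i))

def NarrowPeriodicData (f : M → M) (A : M → X →L[𝕜] X) (m : ℕ) (lam : ℕ → ℝ) (δ : ℝ) :
    Prop :=
  ∀ n : ℕ, 0 < n → ∀ p : M, f^[n] p = p →
    IsQuasiCompactOp (cocycle f A n p) ∧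
    HasExceptionalPrefix (cocycle f A n p) m
      (fun i => Real.exp (n * (lam i - δ))) (fun i => Real.exp (n * (lam i + δ)))

def gelfand (T : X →L[𝕜] X) (q : ℕ) : ℝ :=
  sInf { r : ℝ | ∃ V : Submodule 𝕜 X, IsClosed (V : Set X) ∧
    Module.rank 𝕜 (X ⧸ V) = ((q - 1 : ℕ) : Cardinal) ∧ r = ‖T.comp V.subtypeL‖ }

def DominatedPair (f : M → M) (A : M → X →L[𝕜] X) (E F : M → Submodule 𝕜 X) : Prop :=
  (∀ x, IsClosed (E x : Set X)) ∧ (∀ x, IsClosed (F x : Set X)) ∧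
  (∀ x, IsCompl (E x) (F x)) ∧
  (∃ P : M → X →L[𝕜] X, Continuous P ∧ (∀ x, ∀ v ∈ E x, P x v = v) ∧
    (∀ x, ∀ v ∈ F x, P x v = 0)) ∧
  (∀ x, ∀ n : ℕ, 0 < n → Submodule.map (cocycle f A n x : X →ₗ[𝕜] X) (E x) = E (f^[n] x)) ∧
  (∀ x, ∀ n : ℕ, 0 < n → Submodule.map (cocycle f A n x : X →ₗ[𝕜] X) (F x) ≤ F (f^[n] x)) ∧
  ∃ C > 0, ∃ τ : ℝ, 0 < τ ∧ τ < 1 ∧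
    ∀ x, ∀ n : ℕ, 0 < n → ∀ u ∈ E x, ∀ v ∈ F x, ‖u‖ = 1 → ‖v‖ = 1 →
      ‖cocycle f A n x v‖ ≤ C * τ ^ n * ‖cocycle f A n x u‖

def DominatedSplitting (f : M → M) (A : M → X →L[𝕜] X) (k : ℕ) : Prop :=
  ∃ E F : M → Submodule 𝕜 X, DominatedPair f A E F ∧
    ∀ x, Module.rank 𝕜 (E x) = (k : Cardinal)

def egr (a : ℕ → ℝ) (L : EReal) : Prop :=
  ∀ c : ℝ, ((c : EReal) < L → ∀ᶠ n : ℕ in atTop, Real.exp (c * n) ≤ a n) ∧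
    (L < (c : EReal) → ∀ᶠ n : ℕ in atTop, a n ≤ Real.exp (c * n))

def KappaBoundedBy [MeasurableSpace M] (f : M → M) (A : M → X →L[𝕜] X) (β : ℝ) : Prop :=
  ∀ μ : Measure M, IsProbabilityMeasure μ → Ergodic f μ →
    ∀ᵐ x ∂μ, ∀ᶠ n : ℕ in atTop, icNorm (cocycle f A n x) ≤ Real.exp (β * n)


section Volume

variable [NormedSpace ℝ X] [IsScalarTower ℝ 𝕜 X] [FiniteDimensional ℝ 𝕜]

open Classical in
/-- The determinant of `T` restricted to the finite-dimensional subspace `V`, defined as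
the ratio of Haar measures `ν (T '' B_V) / ν (B_{T V})` on the image subspace `T V`
(and `0` if `T` is not injective on `V`). -/
def subdet (T : X →L[𝕜] X) (V : Submodule 𝕜 X) : ℝ :=
  if h : FiniteDimensional 𝕜 V ∧ Set.InjOn T (V : Set X) then
    haveI : FiniteDimensional 𝕜 V := h.1
    haveI : FiniteDimensional 𝕜 (V.map (T : X →ₗ[𝕜] X)) :=
      Module.Finite.map V (T : X →ₗ[𝕜] X)
    haveI : FiniteDimensional ℝ (V.map (T : X →ₗ[𝕜] X)) :=
      Module.Finite.trans (R := ℝ) 𝕜 _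
    letI : MeasurableSpace (V.map (T : X →ₗ[𝕜] X)) := borel _
    haveI : BorelSpace (V.map (T : X →ₗ[𝕜] X)) := ⟨rfl⟩
    let ν : Measure (V.map (T : X →ₗ[𝕜] X)) := (Module.finBasis ℝ _).addHaar
    (ν {w : V.map (T : X →ₗ[𝕜] X) | ∃ v ∈ V, ‖v‖ ≤ 1 ∧ (w : X) = T v} /
      ν (Metric.closedBall 0 1)).toReal
  else 0

/-- The maximal `q`-dimensional volume growth `V_q(T)`. -/
def volGrowth (T : X →L[𝕜] X) (q : ℕ) : ℝ :=
  sSup { r : ℝ | ∃ V : Submodule 𝕜 X, Module.rank 𝕜 V = (q : Cardinal) ∧ r = subdet T V }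

end Volume

end QCDS


namespace QCDS

open scoped ENNReal NNReal Pointwise

section Transfer

variable {E : Type*} [NormedAddCommGroup E] [NormedSpace ℝ E] [FiniteDimensional ℝ E]
  [MeasurableSpace E] [BorelSpace E]
variable {F : Type*} [NormedAddCommGroup F] [NormedSpace ℝ F] [FiniteDimensional ℝ F]
  [MeasurableSpace F] [BorelSpace F]

/-- Transfer of Haar-measure ratios through a continuous linear equivalence. -/
theorem haar_ratio_image (e : E ≃L[ℝ] F) (μ : Measure E) [μ.IsAddHaarMeasure]
    (ν : Measure F) [ν.IsAddHaarMeasure] {s t : Set E}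
    (hs : MeasurableSet s) (ht : MeasurableSet t) :
    ν (e '' s) / ν (e '' t) = μ s / μ t := by
  have hmap : ∀ u : Set E, MeasurableSet u → (μ.map e) (e '' u) = μ u := by
    intro u hu
    have himg : MeasurableSet (e '' u) :=
      e.toHomeomorph.measurableEmbedding.measurableSet_image.2 hu
    rw [Measure.map_apply e.continuous.measurable himg,
      Set.preimage_image_eq u e.injective]
  haveI : (μ.map e).IsAddHaarMeasure := e.isAddHaarMeasure_map μ
  have hfac : μ.map e = (μ.map e).addHaarScalarFactor ν • ν :=
    Measure.isAddLeftInvariant_eq_smul _ _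
  set c : NNReal := (μ.map e).addHaarScalarFactor ν with hc
  have hc0 : (c : ℝ≥0∞) ≠ 0 := by
    exact_mod_cast (Measure.addHaarScalarFactor_pos_of_isAddHaarMeasure _ _).ne'
  have hctop : (c : ℝ≥0∞) ≠ ⊤ := ENNReal.coe_ne_top
  have key : ∀ u : Set E, MeasurableSet u → (c : ℝ≥0∞) * ν (e '' u) = μ u := by
    intro u hu
    rw [← hmap u hu, hfac]
    simp only [Measure.smul_apply, ENNReal.smul_def, smul_eq_mul]
  rw [← key s hs, ← key t ht, ENNReal.mul_div_mul_left _ _ hc0 hctop]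

end Transfer

section Translates

variable {E : Type*} [NormedAddCommGroup E] [NormedSpace ℝ E]
  [MeasurableSpace E] [BorelSpace E]

theorem translates_le_haar (μ : Measure E) [μ.IsAddHaarMeasure] {K : Set E}
    (hK : Convex ℝ K) {ρ : ℝ} (hρ : 0 < ρ) (hball : closedBall (0:E) ρ ⊆ K)
    {x : E} (hx : x ∈ K) (n : ℕ) (hn : 4 * ρ * n ≤ ‖x‖) :
    ((n + 1 : ℕ) : ℝ≥0∞) * μ (closedBall (0:E) (ρ/2)) ≤ μ K := by
  rcases Nat.eq_zero_or_pos n with hn0 | hn1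
  · subst hn0
    have hsub : closedBall (0:E) (ρ/2) ⊆ K :=
      (closedBall_subset_closedBall (by linarith)).trans hball
    simpa using measure_mono hsub
  · have hx4 : 4 * ρ ≤ ‖x‖ := by
      calc 4 * ρ = 4 * ρ * 1 := by ring
      _ ≤ 4 * ρ * n := by
        have : (1:ℝ) ≤ n := by exact_mod_cast hn1
        nlinarith
      _ ≤ ‖x‖ := hn
    have hxnorm : 0 < ‖x‖ := by nlinarith
    have hx0 : x ≠ 0 := by simpa [norm_pos_iff] using hxnorm
    obtain ⟨f, hf1, hfx⟩ := exists_dual_vector ℝ x hxnorm.ne'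
    set c : ℕ → E := fun j => ((2 * ρ * j) / ‖x‖) • x with hcdef
    have hfc : ∀ j : ℕ, f (c j) = 2 * ρ * j := by
      intro j
      rw [hcdef]
      simp only [_root_.map_smul, smul_eq_mul, hfx]
      field_simp
      rfl
    -- each translate is inside K
    have hsub : ∀ j : ℕ, j ≤ n → closedBall (c j) (ρ/2) ⊆ K := by
      intro j hj y hy
      set t : ℝ := (2 * ρ * j) / ‖x‖ with htdef
      have ht0 : 0 ≤ t := by positivity
      have ht12 : t ≤ 1/2 := by
        rw [htdef, div_le_iff₀ hxnorm]
        have hjn : (j:ℝ) ≤ n := by exact_mod_cast hj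
        nlinarith
      have h1t : (0:ℝ) < 1 - t := by linarith
      set b : E := y - c j with hbdef
      have hb : ‖b‖ ≤ ρ/2 := by
        rw [hbdef]
        simpa [dist_eq_norm] using hy
      have hmem : (1 - t)⁻¹ • b ∈ closedBall (0:E) ρ := by
        simp only [mem_closedBall, dist_zero_right, norm_smul, norm_inv, Real.norm_eq_abs,
          abs_of_pos h1t]
        have h2 : (1 - t)⁻¹ ≤ 2 := by
          rw [inv_le_comm₀ h1t (by norm_num)]
          linarith
        calc (1-t)⁻¹ * ‖b‖ ≤ 2 * (ρ/2) := by
              apply mul_le_mul h2 hb (norm_nonneg _) (by norm_num)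
        _ = ρ := by ring
      have : t • x + (1 - t) • ((1 - t)⁻¹ • b) ∈ K :=
        hK hx (hball hmem) ht0 h1t.le (by ring)
      have hyeq : y = t • x + (1 - t) • ((1 - t)⁻¹ • b) := by
        rw [smul_inv_smul₀ h1t.ne']
        simp [hbdef, hcdef, htdef]
      rwa [← hyeq] at this
    -- the translates are pairwise disjoint
    have hdisj : ∀ i ∈ Finset.range (n+1), ∀ j ∈ Finset.range (n+1), i ≠ j →
        Disjoint (closedBall (c i) (ρ/2)) (closedBall (c j) (ρ/2)) := by
      intro i _ j _ hij
      rw [Set.disjoint_left]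
      intro y hyi hyj
      have hi : |f y - 2 * ρ * i| ≤ ρ/2 := by
        have := f.le_opNorm (y - c i)
        rw [hf1, one_mul] at this
        have hdist : ‖y - c i‖ ≤ ρ/2 := by simpa [dist_eq_norm] using hyi
        calc |f y - 2*ρ*i| = |f (y - c i)| := by rw [map_sub, hfc]
        _ = ‖f (y - c i)‖ := (Real.norm_eq_abs _).symm
        _ ≤ ρ/2 := this.trans hdist
      have hj : |f y - 2 * ρ * j| ≤ ρ/2 := by
        have := f.le_opNorm (y - c j)
        rw [hf1, one_mul] at this
        have hdist : ‖y - c j‖ ≤ ρ/2 := by simpa [dist_eq_norm] using hyj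
        calc |f y - 2*ρ*j| = |f (y - c j)| := by rw [map_sub, hfc]
        _ = ‖f (y - c j)‖ := (Real.norm_eq_abs _).symm
        _ ≤ ρ/2 := this.trans hdist
      have hij1 : (1:ℝ) ≤ |(i:ℝ) - j| := by
        have hne : ((i:ℤ) - j) ≠ 0 := by
          simp only [sub_ne_zero]
          exact_mod_cast hij
        have h1 : (1:ℤ) ≤ |(i:ℤ) - j| := Int.one_le_abs hne
        have : (1:ℝ) ≤ |((i:ℤ) - j : ℤ)| := by exact_mod_cast h1
        simpa using this
      have : 2*ρ*|(i:ℝ)-j| ≤ ρ := by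
        calc 2*ρ*|(i:ℝ)-j| = |2*ρ*((i:ℝ)-j)| := by
              rw [abs_mul, abs_of_pos (show (0:ℝ) < 2*ρ by linarith)]
        _ = |(f y - 2*ρ*j) - (f y - 2*ρ*i)| := by congr 1; ring
        _ ≤ |f y - 2*ρ*j| + |f y - 2*ρ*i| := abs_sub _ _
        _ ≤ ρ := by linarith
      nlinarith
    -- sum up
    have hunion : (⋃ j ∈ Finset.range (n+1), closedBall (c j) (ρ/2)) ⊆ K := by
      intro y hy
      simp only [Set.mem_iUnion] at hy
      obtain ⟨j, hj, hyj⟩ := hy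
      exact hsub j (Nat.lt_succ_iff.mp (Finset.mem_range.mp hj)) hyj
    calc ((n + 1 : ℕ) : ℝ≥0∞) * μ (closedBall (0:E) (ρ/2))
        = ∑ j ∈ Finset.range (n+1), μ (closedBall (c j) (ρ/2)) := by
          simp [Measure.addHaar_closedBall_center μ, Finset.sum_const]
      _ = μ (⋃ j ∈ Finset.range (n+1), closedBall (c j) (ρ/2)) :=
          (measure_biUnion_finset hdisj (fun j _ => measurableSet_closedBall)).symm
      _ ≤ μ K := measure_mono hunion

end Translates

section KsetBasics

variable {E : Type*} [NormedAddCommGroup E] [NormedSpace ℝ E]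
  {Y : Type*} [NormedAddCommGroup Y] [NormedSpace ℝ Y]

theorem Kset_convex (u : E →L[ℝ] Y) : Convex ℝ {v : E | ‖u v‖ ≤ 1} := by
  have : {v : E | ‖u v‖ ≤ 1} = (u : E →ₗ[ℝ] Y) ⁻¹' closedBall 0 1 := by
    ext v; simp [mem_closedBall, dist_zero_right]
  rw [this]
  exact (convex_closedBall (0:Y) 1).linear_preimage _

theorem Kset_closed (u : E →L[ℝ] Y) : IsClosed {v : E | ‖u v‖ ≤ 1} :=
  isClosed_le u.continuous.norm continuous_const

theorem Kset_ball_subset {u : E →L[ℝ] Y} {N : ℝ} (hN : 0 < N)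
    (h : ∀ v, ‖u v‖ ≤ N * ‖v‖) : closedBall (0:E) N⁻¹ ⊆ {v : E | ‖u v‖ ≤ 1} := by
  intro v hv
  simp only [mem_closedBall, dist_zero_right] at hv
  have := h v
  calc ‖u v‖ ≤ N * ‖v‖ := h v
  _ ≤ N * N⁻¹ := by nlinarith [norm_nonneg v]
  _ = 1 := mul_inv_cancel₀ hN.ne'

theorem Kset_infinite [FiniteDimensional ℝ E] [MeasurableSpace E] [BorelSpace E]
    (μ : MeasureTheory.Measure E) [μ.IsAddHaarMeasure]
    {u : E →L[ℝ] Y} {d : E} (hd : d ≠ 0) (hud : u d = 0) :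
    μ {v : E | ‖u v‖ ≤ 1} = ⊤ := by
  set K := {v : E | ‖u v‖ ≤ 1} with hKdef
  set ρ : ℝ := (‖u‖ + 1)⁻¹ with hρdef
  have hρ : 0 < ρ := by positivity
  have hball : closedBall (0:E) ρ ⊆ K := by
    have := Kset_ball_subset (u := u) (N := ‖u‖ + 1) (by positivity)
      (fun v => (u.le_opNorm v).trans (by nlinarith [norm_nonneg v, norm_nonneg (u v)]))
    simpa [hρdef] using this
  have hδpos : 0 < μ (closedBall (0:E) (ρ/2)) :=
    measure_closedBall_pos μ _ (by positivity)
  have hδtop : μ (closedBall (0:E) (ρ/2)) ≠ ⊤ := measure_closedBall_lt_top.ne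
  by_contra hne
  obtain ⟨n, hn⟩ := ENNReal.exists_nat_gt
    (show μ K / μ (closedBall (0:E) (ρ/2)) ≠ ⊤ from (ENNReal.div_lt_top hne hδpos.ne').ne)
  have hdn : ‖d‖ ≠ 0 := by simpa using hd
  have hxmem : ((4*ρ*n + 1)/‖d‖) • d ∈ K := by
    simp [hKdef, _root_.map_smul, hud]
  have hnorm : ‖((4*ρ*n + 1)/‖d‖) • d‖ = 4*ρ*n + 1 := by
    rw [norm_smul, Real.norm_eq_abs, abs_of_pos (by positivity)]
    field_simp
  have hle := translates_le_haar μ (Kset_convex u) hρ hball hxmem n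
    (by rw [hnorm]; linarith)
  have hlt : μ K < (n : ℝ≥0∞) * μ (closedBall (0:E) (ρ/2)) := by
    rwa [ENNReal.div_lt_iff (Or.inl hδpos.ne') (Or.inl hδtop)] at hn
  have : (n : ℝ≥0∞) * μ (closedBall (0:E) (ρ/2)) ≤ μ K := by
    refine le_trans ?_ hle
    exact mul_le_mul_left (by exact_mod_cast Nat.le_succ n) _
  exact absurd (hlt.trans_le this) (lt_irrefl _)

end KsetBasics

section Bridge

variable {X : Type*} [NormedAddCommGroup X] [NormedSpace ℝ X]

theorem subdet_eq_ratio (T : X →L[ℝ] X) (V : Submodule ℝ X) [FiniteDimensional ℝ V]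
    [MeasurableSpace V] [BorelSpace V] (μ : MeasureTheory.Measure V) [μ.IsAddHaarMeasure] :
    subdet T V =
      (μ (closedBall 0 1) / μ {v : V | ‖T.comp V.subtypeL v‖ ≤ 1}).toReal := by
  have hKmeas : MeasurableSet {v : V | ‖T.comp V.subtypeL v‖ ≤ 1} :=
    (Kset_closed (T.comp V.subtypeL)).measurableSet
  by_cases hinj : Set.InjOn T (V : Set X)
  · have h : FiniteDimensional ℝ V ∧ Set.InjOn T (V : Set X) := ⟨inferInstance, hinj⟩
    unfold subdet
    rw [dif_pos h]
    letI : MeasurableSpace (Submodule.map (T : X →ₗ[ℝ] X) V) :=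
      borel (Submodule.map (T : X →ₗ[ℝ] X) V)
    haveI : BorelSpace (Submodule.map (T : X →ₗ[ℝ] X) V) := ⟨rfl⟩
    haveI : FiniteDimensional ℝ (Submodule.map (T : X →ₗ[ℝ] X) V) :=
      Module.Finite.map V (T : X →ₗ[ℝ] X)
    have hmem : ∀ v ∈ V, (T : X →ₗ[ℝ] X) v ∈ Submodule.map (T : X →ₗ[ℝ] X) V :=
      fun v hv => Submodule.mem_map_of_mem hv
    set φ : V →ₗ[ℝ] Submodule.map (T : X →ₗ[ℝ] X) V :=
      LinearMap.restrict (T : X →ₗ[ℝ] X) hmem with hφdef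
    have hbij : Function.Bijective φ := by
      constructor
      · intro v1 v2 h12
        have : T (v1 : X) = T (v2 : X) := by
          have := congrArg (Subtype.val) h12
          simpa [hφdef, LinearMap.restrict_apply] using this
        exact Subtype.ext (hinj v1.2 v2.2 this)
      · rintro ⟨w, hw⟩
        obtain ⟨v, hv, hTv⟩ := hw
        exact ⟨⟨v, hv⟩, Subtype.ext (by simpa [hφdef, LinearMap.restrict_apply] using hTv)⟩
    set e : V ≃L[ℝ] Submodule.map (T : X →ₗ[ℝ] X) V :=
      (LinearEquiv.ofBijective φ hbij).toContinuousLinearEquiv with hedef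
    have he : ∀ v : V, ((e v : Submodule.map (T : X →ₗ[ℝ] X) V) : X) = T (v : X) := by
      intro v
      simp [hedef, hφdef, LinearMap.restrict_apply]
    have h1 : {w : Submodule.map (T : X →ₗ[ℝ] X) V | ∃ v ∈ V, ‖v‖ ≤ 1 ∧ (w : X) = T v} =
        ⇑e '' (closedBall 0 1) := by
      ext w
      simp only [Set.mem_setOf_eq, Set.mem_image, mem_closedBall, dist_zero_right]
      constructor
      · rintro ⟨v, hv, hle, hw⟩
        refine ⟨⟨v, hv⟩, by simpa [Submodule.coe_norm] using hle, ?_⟩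
        exact Subtype.ext (by rw [he]; exact hw.symm)
      · rintro ⟨v, hle, rfl⟩
        exact ⟨(v : X), v.2, by simpa [Submodule.coe_norm] using hle, (he v).symm⟩
    have h2 : (closedBall (0 : Submodule.map (T : X →ₗ[ℝ] X) V) 1) =
        ⇑e '' {v : V | ‖T.comp V.subtypeL v‖ ≤ 1} := by
      ext w
      simp only [mem_closedBall, dist_zero_right, Set.mem_image, Set.mem_setOf_eq]
      constructor
      · intro hw
        refine ⟨e.symm w, ?_, e.apply_symm_apply w⟩
        have : ((e (e.symm w) : Submodule.map (T : X →ₗ[ℝ] X) V) : X) = T ((e.symm w : V) : X) :=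
          he _
        rw [e.apply_symm_apply w] at this
        have hTnorm : ‖T ((e.symm w : V) : X)‖ = ‖w‖ := by
          rw [← this]; exact rfl
        simp only [ContinuousLinearMap.comp_apply, Submodule.subtypeL_apply]
        rw [hTnorm]; exact hw
      · rintro ⟨v, hv, rfl⟩
        simp only [ContinuousLinearMap.comp_apply, Submodule.subtypeL_apply] at hv
        have : ‖e v‖ = ‖T (v : X)‖ := by
          rw [← he v]; exact rfl
        rw [this]; exact hv
    rw [h1, h2]
    have hballmeas : MeasurableSet (closedBall (0:V) 1) := measurableSet_closedBall
    exact congrArg ENNReal.toReal (haar_ratio_image e μ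
      ((Module.finBasis ℝ (Submodule.map (T : X →ₗ[ℝ] X) V)).addHaar) hballmeas hKmeas)
  · unfold subdet
    rw [dif_neg (fun h => hinj h.2)]
    simp only [Set.InjOn] at hinj
    push_neg at hinj
    obtain ⟨a, ha, b, hb, hab, hne⟩ := hinj
    have hd : (⟨a - b, sub_mem ha hb⟩ : V) ≠ 0 := by
      intro h
      exact hne (by simpa [sub_eq_zero] using congrArg Subtype.val h)
    have hud : (T.comp V.subtypeL) (⟨a - b, sub_mem ha hb⟩ : V) = 0 := by
      simp [map_sub, hab]
    rw [Kset_infinite μ hd hud]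
    simp [ENNReal.div_top]

end Bridge

section Estimates

variable {E : Type*} [NormedAddCommGroup E] [NormedSpace ℝ E] [FiniteDimensional ℝ E]
  [MeasurableSpace E] [BorelSpace E]
variable {Y : Type*} [NormedAddCommGroup Y] [NormedSpace ℝ Y]

theorem ENN_cancel {β : ℝ≥0∞} (hβ0 : β ≠ 0) (hβt : β ≠ ⊤) (c : ℝ≥0∞) :
    β / (c * β) = c⁻¹ := by
  rw [div_eq_mul_inv, ENNReal.mul_inv (Or.inr hβt) (Or.inr hβ0), ← mul_assoc,
    mul_comm β c⁻¹, mul_assoc, ENNReal.mul_inv_cancel hβ0 hβt, mul_one]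

theorem toReal_div_le {a : ℝ≥0∞} (β : ℝ≥0∞) (hβ0 : β ≠ 0) (hβt : β ≠ ⊤) {γ : ℝ}
    (hγ : 0 < γ) (h : ENNReal.ofReal γ * β ≤ a) : (β / a).toReal ≤ γ⁻¹ := by
  have hc0 : ENNReal.ofReal γ ≠ 0 := (ENNReal.ofReal_pos.2 hγ).ne'
  have h1 : β / a ≤ β / (ENNReal.ofReal γ * β) := ENNReal.div_le_div_left h β
  have h2 : β / (ENNReal.ofReal γ * β) = (ENNReal.ofReal γ)⁻¹ := ENN_cancel hβ0 hβt _
  have h3 : (ENNReal.ofReal γ)⁻¹ ≠ ⊤ := by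
    simp [ENNReal.inv_ne_top, hc0]
  calc (β / a).toReal ≤ ((ENNReal.ofReal γ)⁻¹).toReal :=
        ENNReal.toReal_mono h3 (h2 ▸ h1)
  _ = γ⁻¹ := by
      rw [← ENNReal.ofReal_inv_of_pos hγ, ENNReal.toReal_ofReal (by positivity)]

theorem measure_closedBall_eq (μ : MeasureTheory.Measure E) [μ.IsAddHaarMeasure]
    {r : ℝ} (hr : 0 ≤ r) :
    μ (closedBall (0:E) r) =
      ENNReal.ofReal (r ^ Module.finrank ℝ E) * μ (closedBall (0:E) 1) := by
  have h : closedBall (0:E) r = r • closedBall (0:E) 1 := by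
    rw [_root_.smul_closedBall _ _ zero_le_one, smul_zero, Real.norm_eq_abs, abs_of_nonneg hr, mul_one]
  rw [h, Measure.addHaar_smul μ, abs_pow, abs_of_nonneg hr]

theorem measure_K_lb (μ : MeasureTheory.Measure E) [μ.IsAddHaarMeasure]
    {u : E →L[ℝ] Y} {N : ℝ} (hN : 0 < N) (hu : ∀ v, ‖u v‖ ≤ N * ‖v‖) :
    ENNReal.ofReal (N⁻¹ ^ Module.finrank ℝ E) * μ (closedBall (0:E) 1) ≤ μ {v : E | ‖u v‖ ≤ 1} := by
  rw [← measure_closedBall_eq μ (by positivity)]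
  exact measure_mono (Kset_ball_subset hN hu)

theorem d_le (μ : MeasureTheory.Measure E) [μ.IsAddHaarMeasure]
    {u : E →L[ℝ] Y} {N : ℝ} (hN : 0 < N) (hu : ∀ v, ‖u v‖ ≤ N * ‖v‖) :
    (μ (closedBall (0:E) 1) / μ {v : E | ‖u v‖ ≤ 1}).toReal ≤ N ^ Module.finrank ℝ E := by
  have hβ0 : μ (closedBall (0:E) 1) ≠ 0 := (measure_closedBall_pos μ _ one_pos).ne'
  have hβt : μ (closedBall (0:E) 1) ≠ ⊤ := measure_closedBall_lt_top.ne
  have := toReal_div_le (a := μ {v : E | ‖u v‖ ≤ 1}) _ hβ0 hβt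
    (γ := N⁻¹ ^ Module.finrank ℝ E) (by positivity) (measure_K_lb μ hN hu)
  rwa [← inv_pow, inv_inv] at this

theorem d_nonneg (μ : MeasureTheory.Measure E) (s t : Set E) : 0 ≤ (μ s / μ t).toReal :=
  ENNReal.toReal_nonneg


theorem d_comparison (μ : MeasureTheory.Measure E) [μ.IsAddHaarMeasure]
    (u w : E →L[ℝ] Y) {N R η : ℝ}
    (hN1 : 1 ≤ N) (hR1 : 1 ≤ R) (hη0 : 0 ≤ η) (hηR : η * R ≤ 1)
    (hu : ∀ v, ‖u v‖ ≤ N * ‖v‖) (hw : ∀ v, ‖w v‖ ≤ N * ‖v‖)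
    (huw : ∀ v, ‖u v - w v‖ ≤ η * ‖v‖) :
    (μ (closedBall (0:E) 1) / μ {v : E | ‖u v‖ ≤ 1}).toReal ≤
      (μ (closedBall (0:E) 1) / μ {v : E | ‖w v‖ ≤ 1}).toReal
      + ((1 + η*R)^(Module.finrank ℝ E) - 1) * N^(Module.finrank ℝ E)
      + 2^(Module.finrank ℝ E + 3) * N^(Module.finrank ℝ E) / R := by
  set k := Module.finrank ℝ E with hkdef
  have hN0 : 0 < N := lt_of_lt_of_le one_pos hN1
  have hR0 : 0 < R := lt_of_lt_of_le one_pos hR1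
  have hβ0 : μ (closedBall (0:E) 1) ≠ 0 := (measure_closedBall_pos μ _ one_pos).ne'
  have hβt : μ (closedBall (0:E) 1) ≠ ⊤ := measure_closedBall_lt_top.ne
  have h1p : (0:ℝ) < 1 + η*R := by nlinarith
  have h1k : 1 ≤ (1+η*R)^k := one_le_pow₀ (by nlinarith)
  have hterm2 : 0 ≤ ((1 + η*R)^k - 1) * N^k := by
    have := pow_pos hN0 k
    nlinarith
  have hterm3 : 0 ≤ 2^(k+3) * N^k / R := by positivity
  by_cases hcase : {v : E | ‖w v‖ ≤ 1} ⊆ closedBall (0:E) R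
  · -- Case A : K_w is contained in the ball of radius R
    have hsub : {v : E | ‖w v‖ ≤ 1} ⊆ (1 + η*R) • {v : E | ‖u v‖ ≤ 1} := by
      intro v hv
      have hv1 : ‖w v‖ ≤ 1 := hv
      have hvR : ‖v‖ ≤ R := by
        have := hcase hv
        simpa [mem_closedBall, dist_zero_right] using this
      have hub : ‖u v‖ ≤ 1 + η*R := by
        have h2 : ‖u v‖ ≤ ‖w v‖ + η * ‖v‖ := by
          calc ‖u v‖ = ‖w v + (u v - w v)‖ := by rw [add_sub_cancel]
          _ ≤ ‖w v‖ + ‖u v - w v‖ := norm_add_le _ _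
          _ ≤ ‖w v‖ + η*‖v‖ := by linarith [huw v]
        nlinarith [norm_nonneg v]
      refine Set.mem_smul_set.2 ⟨(1+η*R)⁻¹ • v, ?_, ?_⟩
      · show ‖u ((1+η*R)⁻¹ • v)‖ ≤ 1
        rw [_root_.map_smul, norm_smul, Real.norm_eq_abs, abs_of_pos (by positivity)]
        calc (1+η*R)⁻¹ * ‖u v‖ ≤ (1+η*R)⁻¹ * (1+η*R) :=
              mul_le_mul_of_nonneg_left hub (by positivity)
        _ = 1 := inv_mul_cancel₀ h1p.ne'
      · rw [smul_inv_smul₀ h1p.ne']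
    have hmeasred : μ {v : E | ‖w v‖ ≤ 1} ≤
        ENNReal.ofReal ((1+η*R)^k) * μ {v : E | ‖u v‖ ≤ 1} := by
      calc μ {v : E | ‖w v‖ ≤ 1} ≤ μ ((1+η*R) • {v : E | ‖u v‖ ≤ 1}) := measure_mono hsub
      _ = ENNReal.ofReal (|(1+η*R)^k|) * μ {v : E | ‖u v‖ ≤ 1} := by
          rw [Measure.addHaar_smul μ]
      _ = ENNReal.ofReal ((1+η*R)^k) * μ {v : E | ‖u v‖ ≤ 1} := by
          rw [abs_of_pos (pow_pos h1p k)]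
    have hKw0 : μ {v : E | ‖w v‖ ≤ 1} ≠ 0 :=
      ((measure_closedBall_pos μ (0:E) (show (0:ℝ) < N⁻¹ by positivity)).trans_le
        (measure_mono (Kset_ball_subset hN0 hw))).ne'
    have hKwt : μ {v : E | ‖w v‖ ≤ 1} ≠ ⊤ :=
      ((measure_mono hcase).trans_lt measure_closedBall_lt_top).ne
    set c : ℝ≥0∞ := ENNReal.ofReal ((1+η*R)^k) with hcdef
    have hc0 : c ≠ 0 := (ENNReal.ofReal_pos.2 (pow_pos h1p k)).ne'
    have hct : c ≠ ⊤ := ENNReal.ofReal_ne_top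
    have hchain : μ (closedBall (0:E) 1) / μ {v : E | ‖u v‖ ≤ 1} ≤
        c * (μ (closedBall (0:E) 1) / μ {v : E | ‖w v‖ ≤ 1}) := by
      calc μ (closedBall (0:E) 1) / μ {v : E | ‖u v‖ ≤ 1}
          = (c * μ (closedBall (0:E) 1)) / (c * μ {v : E | ‖u v‖ ≤ 1}) :=
            (ENNReal.mul_div_mul_left _ _ hc0 hct).symm
      _ ≤ (c * μ (closedBall (0:E) 1)) / μ {v : E | ‖w v‖ ≤ 1} :=
            ENNReal.div_le_div_left hmeasred _
      _ = c * (μ (closedBall (0:E) 1) / μ {v : E | ‖w v‖ ≤ 1}) := by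
            rw [div_eq_mul_inv, mul_assoc, ← div_eq_mul_inv]
    have hfin : c * (μ (closedBall (0:E) 1) / μ {v : E | ‖w v‖ ≤ 1}) ≠ ⊤ :=
      ENNReal.mul_ne_top hct (ENNReal.div_lt_top hβt hKw0).ne
    have hre : (μ (closedBall (0:E) 1) / μ {v : E | ‖u v‖ ≤ 1}).toReal ≤
        (1+η*R)^k * (μ (closedBall (0:E) 1) / μ {v : E | ‖w v‖ ≤ 1}).toReal := by
      have := ENNReal.toReal_mono hfin hchain
      rwa [ENNReal.toReal_mul, hcdef, ENNReal.toReal_ofReal (pow_pos h1p k).le] at this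
    have hdw_le : (μ (closedBall (0:E) 1) / μ {v : E | ‖w v‖ ≤ 1}).toReal ≤ N^k :=
      d_le μ hN0 hw
    have hdw_nn : 0 ≤ (μ (closedBall (0:E) 1) / μ {v : E | ‖w v‖ ≤ 1}).toReal :=
      ENNReal.toReal_nonneg
    nlinarith [hre]
  · -- Case B : K_w contains a point of norm > R
    obtain ⟨x, hxK, hxB⟩ := Set.not_subset.1 hcase
    have hxR : R < ‖x‖ := by
      simpa [mem_closedBall, dist_zero_right, not_le] using hxB
    have hx0 : 0 < ‖x‖ := hR0.trans hxR
    set y := (R/‖x‖) • x with hydef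
    have hyn : ‖y‖ = R := by
      rw [hydef, norm_smul, Real.norm_eq_abs, abs_of_pos (by positivity)]
      field_simp
    have hyK : ‖w y‖ ≤ 1 := by
      rw [hydef, _root_.map_smul, norm_smul, Real.norm_eq_abs, abs_of_pos (by positivity)]
      have hxK1 : ‖w x‖ ≤ 1 := hxK
      have hfrac : R/‖x‖ ≤ 1 := by
        rw [div_le_one hx0]; linarith
      nlinarith [norm_nonneg (w x), div_pos hR0 hx0]
    set z := (1+η*R)⁻¹ • y with hzdef
    have hzK : z ∈ {v : E | ‖u v‖ ≤ 1} := by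
      show ‖u z‖ ≤ 1
      rw [hzdef, _root_.map_smul, norm_smul, Real.norm_eq_abs, abs_of_pos (by positivity)]
      have huy : ‖u y‖ ≤ 1 + η*R := by
        calc ‖u y‖ = ‖w y + (u y - w y)‖ := by rw [add_sub_cancel]
        _ ≤ ‖w y‖ + ‖u y - w y‖ := norm_add_le _ _
        _ ≤ 1 + η*‖y‖ := by linarith [huw y]
        _ = 1 + η*R := by rw [hyn]
      calc (1+η*R)⁻¹ * ‖u y‖ ≤ (1+η*R)⁻¹ * (1+η*R) :=
            mul_le_mul_of_nonneg_left huy (by positivity)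
      _ = 1 := inv_mul_cancel₀ h1p.ne'
    have hzn : R/2 ≤ ‖z‖ := by
      rw [hzdef, norm_smul, Real.norm_eq_abs, abs_of_pos (by positivity), hyn]
      have h2 : 1 + η*R ≤ 2 := by linarith
      have hinv : (2:ℝ)⁻¹ ≤ (1+η*R)⁻¹ := by
        apply inv_anti₀ h1p h2
      nlinarith
    set n := ⌊R*N/8⌋₊ with hndef
    have hcond : 4 * N⁻¹ * (n:ℝ) ≤ ‖z‖ := by
      have hf1 : (n:ℝ) ≤ R*N/8 := Nat.floor_le (by positivity)
      have hf2 : 4 * N⁻¹ * (n:ℝ) ≤ 4 * N⁻¹ * (R*N/8) :=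
        mul_le_mul_of_nonneg_left hf1 (by positivity)
      have hf3 : 4 * N⁻¹ * (R*N/8) = R/2 := by field_simp; ring
      linarith
    have hρ : (0:ℝ) < N⁻¹ := by positivity
    have hle := translates_le_haar μ (Kset_convex u) hρ (Kset_ball_subset hN0 hu) hzK n hcond
    set γ : ℝ := ((n:ℝ)+1) * (N⁻¹/2)^k with hγdef
    have hγ : 0 < γ := by positivity
    have hmeas : ENNReal.ofReal γ * μ (closedBall (0:E) 1) ≤ μ {v : E | ‖u v‖ ≤ 1} := by
      have hncast : ENNReal.ofReal ((n:ℝ)+1) = ((n+1:ℕ):ℝ≥0∞) := by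
        have : ((n:ℝ)+1) = ((n+1:ℕ):ℝ) := by push_cast; ring
        rw [this, ENNReal.ofReal_natCast]
      calc ENNReal.ofReal γ * μ (closedBall (0:E) 1)
          = ENNReal.ofReal ((n:ℝ)+1) * (ENNReal.ofReal ((N⁻¹/2)^k) * μ (closedBall (0:E) 1)) := by
            rw [hγdef, ENNReal.ofReal_mul (by positivity), mul_assoc]
      _ = ((n+1:ℕ):ℝ≥0∞) * μ (closedBall (0:E) (N⁻¹/2)) := by
            rw [hncast, ← measure_closedBall_eq μ (show (0:ℝ) ≤ N⁻¹/2 by positivity)]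
      _ ≤ μ {v : E | ‖u v‖ ≤ 1} := hle
    have hdu := toReal_div_le _ hβ0 hβt hγ hmeas
    have hfloor : R*N/8 < (n:ℝ)+1 := Nat.lt_floor_add_one _
    have hbound : γ⁻¹ ≤ 2^(k+3) * N^k / R := by
      have hP : (N⁻¹/2)^k = ((2*N)^k)⁻¹ := by
        rw [← inv_pow]
        congr 1
        rw [div_eq_mul_inv, ← mul_inv, mul_comm N 2]
      rw [hγdef, hP, mul_inv, inv_inv, mul_comm (((n:ℝ)+1))⁻¹ _, ← div_eq_mul_inv]
      rw [div_le_div_iff₀ (by positivity) hR0]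
      have h2N : (2*N)^k = 2^k * N^k := mul_pow 2 N k
      have h8 : R ≤ 8*((n:ℝ)+1) := by nlinarith
      have h2k3 : (2:ℝ)^(k+3) = 2^k * 8 := by rw [pow_add]; norm_num
      calc (2*N)^k * R ≤ 2^k * N^k * (8*((n:ℝ)+1)) := by
            rw [h2N]
            exact mul_le_mul_of_nonneg_left h8 (by positivity)
      _ = 2^(k+3) * N^k * ((n:ℝ)+1) := by rw [h2k3]; ring
    have hdw_nn : 0 ≤ (μ (closedBall (0:E) 1) / μ {v : E | ‖w v‖ ≤ 1}).toReal :=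
      ENNReal.toReal_nonneg
    linarith

end Estimates

section Assembly

variable {X : Type*} [NormedAddCommGroup X] [NormedSpace ℝ X]

theorem pow_one_add_le {t : ℝ} (ht0 : 0 ≤ t) (ht1 : t ≤ 1) (k : ℕ) :
    (1+t)^k ≤ 1 + t * 3^k := by
  induction k with
  | zero => simpa using ht0
  | succ k ih =>
    have h3 : (0:ℝ) < 3^k := by positivity
    have h31 : (1:ℝ) ≤ 3^k := one_le_pow₀ (by norm_num)
    calc (1+t)^(k+1) = (1+t)^k * (1+t) := pow_succ _ _
    _ ≤ (1 + t*3^k) * (1+t) := by nlinarith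
    _ = 1 + t*(3^k + 1 + t*3^k) := by ring
    _ ≤ 1 + t*(3^(k+1)) := by
        have hin : 3^k + 1 + t*3^k ≤ 3*3^k := by nlinarith
        have := mul_le_mul_of_nonneg_left hin ht0
        calc 1 + t*(3^k + 1 + t*3^k) ≤ 1 + t*(3*3^k) := by linarith
        _ = 1 + t*(3^(k+1)) := by rw [pow_succ]; ring

theorem subdet_nonneg (T : X →L[ℝ] X) (V : Submodule ℝ X) : 0 ≤ subdet T V := by
  unfold subdet
  split
  · exact ENNReal.toReal_nonneg
  · exact le_refl 0

theorem subdet_le_bound (T : X →L[ℝ] X) (V : Submodule ℝ X) {k : ℕ}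
    (hV : Module.rank ℝ V = (k : Cardinal)) {N : ℝ} (hN : 0 < N)
    (hTN : ∀ x : X, ‖T x‖ ≤ N * ‖x‖) :
    subdet T V ≤ N ^ k := by
  haveI : FiniteDimensional ℝ V := Module.finite_of_rank_eq_nat hV
  have hfr : Module.finrank ℝ V = k := Module.finrank_eq_of_rank_eq hV
  letI : MeasurableSpace V := borel V
  haveI : BorelSpace V := ⟨rfl⟩
  rw [subdet_eq_ratio T V ((Module.finBasis ℝ V).addHaar)]
  have hu : ∀ v : V, ‖(T.comp V.subtypeL) v‖ ≤ N * ‖v‖ := by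
    intro v
    calc ‖(T.comp V.subtypeL) v‖ = ‖T (v : X)‖ := by
          simp [ContinuousLinearMap.comp_apply]
    _ ≤ N * ‖(v : X)‖ := hTN _
    _ = N * ‖v‖ := by rw [← Submodule.coe_norm]
  have h := d_le ((Module.finBasis ℝ V).addHaar) hN hu
  calc _ ≤ N ^ Module.finrank ℝ V := h
  _ = N ^ k := by rw [hfr]

theorem volGrowth_bddAbove (T : X →L[ℝ] X) (k : ℕ) :
    BddAbove { r : ℝ | ∃ V : Submodule ℝ X, Module.rank ℝ V = (k : Cardinal) ∧
      r = subdet T V } := by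
  refine ⟨(‖T‖+1)^k, ?_⟩
  rintro r ⟨V, hV, rfl⟩
  exact subdet_le_bound T V hV (by positivity)
    (fun x => (T.le_opNorm x).trans (by nlinarith [norm_nonneg x, norm_nonneg (T x)]))

theorem volGrowth_nonneg (T : X →L[ℝ] X) (k : ℕ) : 0 ≤ volGrowth T k := by
  unfold volGrowth
  apply Real.sSup_nonneg
  rintro r ⟨V, hV, rfl⟩
  exact subdet_nonneg T V

theorem subdet_le_volGrowth (T : X →L[ℝ] X) (V : Submodule ℝ X) {k : ℕ}
    (hV : Module.rank ℝ V = (k : Cardinal)) : subdet T V ≤ volGrowth T k :=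
  le_csSup (volGrowth_bddAbove T k) ⟨V, hV, rfl⟩

theorem volGrowth_le_of_pointwise {T T' : X →L[ℝ] X} {k : ℕ} {c : ℝ} (hc : 0 ≤ c)
    (h : ∀ V : Submodule ℝ X, Module.rank ℝ V = (k : Cardinal) →
      subdet T V ≤ subdet T' V + c) :
    volGrowth T k ≤ volGrowth T' k + c := by
  unfold volGrowth
  apply Real.sSup_le
  · rintro r ⟨V, hV, rfl⟩
    have h1 := h V hV
    have h2 := subdet_le_volGrowth T' V hV
    unfold volGrowth at h2
    linarith
  · have := volGrowth_nonneg T' k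
    unfold volGrowth at this
    linarith

end Assembly

section Submult

variable {X : Type*} [NormedAddCommGroup X] [NormedSpace ℝ X]

set_option maxHeartbeats 2000000 in
theorem subdet_comp_le (T S : X →L[ℝ] X) (V : Submodule ℝ X) {k : ℕ}
    (hV : Module.rank ℝ V = (k : Cardinal)) :
    subdet (T.comp S) V ≤ volGrowth T k * volGrowth S k := by
  haveI : FiniteDimensional ℝ V := Module.finite_of_rank_eq_nat hV
  by_cases hinjS : Set.InjOn S (V : Set X)
  swap
  · have hninj : ¬ Set.InjOn (T.comp S) (V : Set X) := by
      intro h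
      apply hinjS
      intro a ha b hb hab
      exact h ha hb (by simp [ContinuousLinearMap.comp_apply, hab])
    have h0 : subdet (T.comp S) V = 0 := by
      unfold subdet
      rw [dif_neg (fun h => hninj h.2)]
    rw [h0]
    exact mul_nonneg (volGrowth_nonneg _ _) (volGrowth_nonneg _ _)
  · letI : MeasurableSpace V := borel V
    haveI : BorelSpace V := ⟨rfl⟩
    rw [subdet_eq_ratio (T.comp S) V ((Module.finBasis ℝ V).addHaar)]
    set μ := (Module.finBasis ℝ V).addHaar with hμdef
    set W := Submodule.map (S : X →ₗ[ℝ] X) V with hWdef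
    haveI : FiniteDimensional ℝ W := Module.Finite.map V (S : X →ₗ[ℝ] X)
    letI : MeasurableSpace W := borel W
    haveI : BorelSpace W := ⟨rfl⟩
    set ν := (Module.finBasis ℝ W).addHaar with hνdef
    set KTS := {v : V | ‖(T.comp S).comp V.subtypeL v‖ ≤ 1} with hKTSdef
    set KS := {v : V | ‖S.comp V.subtypeL v‖ ≤ 1} with hKSdef
    set KT := {w : W | ‖T.comp W.subtypeL w‖ ≤ 1} with hKTdef
    have hmem : ∀ v ∈ V, (S : X →ₗ[ℝ] X) v ∈ W := fun v hv => Submodule.mem_map_of_mem hv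
    set φ : V →ₗ[ℝ] W := LinearMap.restrict (S : X →ₗ[ℝ] X) hmem with hφdef
    have hbij : Function.Bijective φ := by
      constructor
      · intro v1 v2 h12
        have : S (v1 : X) = S (v2 : X) := by
          have := congrArg (Subtype.val) h12
          simpa [hφdef, LinearMap.restrict_apply] using this
        exact Subtype.ext (hinjS v1.2 v2.2 this)
      · rintro ⟨w, hw⟩
        obtain ⟨v, hv, hSv⟩ := hw
        exact ⟨⟨v, hv⟩, Subtype.ext (by simpa [hφdef, LinearMap.restrict_apply] using hSv)⟩
    set e : V ≃L[ℝ] W := (LinearEquiv.ofBijective φ hbij).toContinuousLinearEquiv with hedef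
    have he : ∀ v : V, ((e v : W) : X) = S (v : X) := by
      intro v
      simp [hedef, hφdef, LinearMap.restrict_apply]
    have hrankW : Module.rank ℝ W = (k : Cardinal) := by
      rw [← hV]
      exact ((LinearEquiv.ofBijective φ hbij).rank_eq).symm
    have himg1 : ⇑e '' KTS = KT := by
      ext w
      simp only [hKTSdef, hKTdef, Set.mem_image, Set.mem_setOf_eq,
        ContinuousLinearMap.comp_apply, Submodule.subtypeL_apply]
      constructor
      · rintro ⟨v, hv, rfl⟩
        rwa [he v]
      · intro hw
        refine ⟨e.symm w, ?_, e.apply_symm_apply w⟩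
        have h1 : ((e (e.symm w) : W) : X) = S ((e.symm w : V) : X) := he _
        rw [e.apply_symm_apply w] at h1
        rw [← h1]
        exact hw
    have himg2 : ⇑e '' KS = closedBall (0:W) 1 := by
      ext w
      simp only [hKSdef, Set.mem_image, Set.mem_setOf_eq, mem_closedBall, dist_zero_right,
        ContinuousLinearMap.comp_apply, Submodule.subtypeL_apply]
      constructor
      · rintro ⟨v, hv, rfl⟩
        have : ‖e v‖ = ‖S (v : X)‖ := by rw [Submodule.coe_norm, he v]
        rw [this]
        exact hv
      · intro hw
        refine ⟨e.symm w, ?_, e.apply_symm_apply w⟩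
        have h1 : ((e (e.symm w) : W) : X) = S ((e.symm w : V) : X) := he _
        rw [e.apply_symm_apply w] at h1
        rw [← h1, ← Submodule.coe_norm]
        exact hw
    have hKTSm : MeasurableSet KTS := (Kset_closed ((T.comp S).comp V.subtypeL)).measurableSet
    have hKSm : MeasurableSet KS := (Kset_closed (S.comp V.subtypeL)).measurableSet
    have htrans := haar_ratio_image e μ ν hKTSm hKSm
    rw [himg1, himg2] at htrans
    have haW0 : ν (closedBall (0:W) 1) ≠ 0 := (measure_closedBall_pos ν _ one_pos).ne'
    have haWt : ν (closedBall (0:W) 1) ≠ ⊤ := measure_closedBall_lt_top.ne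
    have hb0 : μ KS ≠ 0 := by
      have hup : ∀ v : V, ‖(S.comp V.subtypeL) v‖ ≤ (‖S.comp V.subtypeL‖+1) * ‖v‖ := by
        intro v
        refine ((S.comp V.subtypeL).le_opNorm v).trans ?_
        nlinarith [norm_nonneg v, norm_nonneg (S.comp V.subtypeL)]
      exact ((measure_closedBall_pos μ (0:V) (show (0:ℝ) <(‖S.comp V.subtypeL‖+1)⁻¹ by
        positivity)).trans_le (measure_mono (Kset_ball_subset (by positivity) hup))).ne'
    have hbt : μ KS ≠ ⊤ := by
      have hsub : KS ⊆ closedBall (0:V) ‖(e.symm : W →L[ℝ] V)‖ := by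
        intro v hv
        have hv1 : ‖S (v : X)‖ ≤ 1 := by
          simpa [hKSdef, ContinuousLinearMap.comp_apply, Submodule.subtypeL_apply] using hv
        have hev : ‖e v‖ ≤ 1 := by
          rw [Submodule.coe_norm, he v]
          exact hv1
        have : ‖(e.symm : W →L[ℝ] V) (e v)‖ ≤ ‖(e.symm : W →L[ℝ] V)‖ * ‖e v‖ :=
          (e.symm : W →L[ℝ] V).le_opNorm _
        have hvv : ‖v‖ ≤ ‖(e.symm : W →L[ℝ] V)‖ * ‖e v‖ := by
          simpa using this
        rw [mem_closedBall, dist_zero_right]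
        nlinarith [norm_nonneg (e.symm : W →L[ℝ] V)]
      exact ((measure_mono hsub).trans_lt measure_closedBall_lt_top).ne
    have hS : subdet S V = (μ (closedBall (0:V) 1) / μ KS).toReal := subdet_eq_ratio S V μ
    have hT : subdet T W = (ν (closedBall (0:W) 1) / ν KT).toReal := subdet_eq_ratio T W ν
    have hinv : ν (closedBall (0:W) 1) / ν KT = μ KS / μ KTS := by
      have h1 : (ν KT / ν (closedBall (0:W) 1))⁻¹ = ν (closedBall (0:W) 1) / ν KT :=
        ENNReal.inv_div (Or.inl haWt) (Or.inl haW0)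
      have h2 : (μ KTS / μ KS)⁻¹ = μ KS / μ KTS :=
        ENNReal.inv_div (Or.inl hbt) (Or.inl hb0)
      rw [← h1, ← h2, htrans]
    have hkey : (μ (closedBall (0:V) 1) / μ KTS).toReal = subdet S V * subdet T W := by
      rw [hS, hT, ← ENNReal.toReal_mul]
      congr 1
      rw [hinv]
      rw [div_eq_mul_inv, div_eq_mul_inv, div_eq_mul_inv]
      have hring : μ (closedBall (0:V) 1) * (μ KS)⁻¹ * (μ KS * (μ KTS)⁻¹)
          = μ (closedBall (0:V) 1) * (μ KTS)⁻¹ * ((μ KS)⁻¹ * μ KS) := by ring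
      rw [hring, ENNReal.inv_mul_cancel hb0 hbt, mul_one]
    rw [hkey]
    calc subdet S V * subdet T W ≤ volGrowth S k * volGrowth T k :=
          mul_le_mul (subdet_le_volGrowth S V hV) (subdet_le_volGrowth T W hrankW)
            (subdet_nonneg T W) (volGrowth_nonneg S k)
    _ = volGrowth T k * volGrowth S k := mul_comm _ _

theorem volGrowth_submul (T S : X →L[ℝ] X) (k : ℕ) :
    volGrowth (T.comp S) k ≤ volGrowth T k * volGrowth S k := by
  unfold volGrowth
  apply Real.sSup_le
  · rintro r ⟨V, hV, rfl⟩
    exact subdet_comp_le T S V hV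
  · exact mul_nonneg (volGrowth_nonneg _ _) (volGrowth_nonneg _ _)

end Submult

section Cont

variable {X : Type*} [NormedAddCommGroup X] [NormedSpace ℝ X]

set_option maxHeartbeats 2000000 in
theorem volGrowth_continuous (k : ℕ) :
    Continuous (fun T : X →L[ℝ] X => volGrowth T k) := by
  rw [Metric.continuous_iff]
  intro T₀ ε hε
  set N : ℝ := ‖T₀‖ + 2 with hNdef
  have hN1 : 1 ≤ N := by have := norm_nonneg T₀; simp only [hNdef]; linarith
  have hN0 : 0 < N := by linarith
  set R : ℝ := max 1 ((4/ε) * (2^(k+3) * N^k)) with hRdef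
  have hR1 : 1 ≤ R := le_max_left _ _
  have hR0 : 0 < R := by linarith
  have hterm3 : 2^(k+3) * N^k / R ≤ ε/4 := by
    have h2 : (4/ε) * (2^(k+3) * N^k) ≤ R := le_max_right _ _
    have h3 := mul_le_mul_of_nonneg_left h2 (show (0:ℝ) ≤ ε/4 by linarith)
    have h4 : ε/4 * ((4/ε) * (2^(k+3) * N^k)) = 2^(k+3) * N^k := by
      field_simp
    rw [div_le_iff₀ hR0]
    linarith
  have hden : (0:ℝ) < 4 * 3^k * N^k * R :=
    mul_pos (by positivity) hR0
  set δ : ℝ := min 1 (min R⁻¹ (ε/(4 * 3^k * N^k * R))) with hδdef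
  have hδ0 : 0 < δ :=
    lt_min one_pos (lt_min (inv_pos.2 hR0) (div_pos hε hden))
  refine ⟨δ, hδ0, ?_⟩
  intro T hdist
  rw [Real.dist_eq]
  have hTT0 : ‖T - T₀‖ ≤ δ := by
    rw [dist_eq_norm] at hdist
    exact hdist.le
  have hδ1 : δ ≤ 1 := min_le_left _ _
  have hδR : δ * R ≤ 1 := by
    have h1 : δ ≤ R⁻¹ := le_trans (min_le_right _ _) (min_le_left _ _)
    calc δ * R ≤ R⁻¹ * R := mul_le_mul_of_nonneg_right h1 hR0.le
    _ = 1 := inv_mul_cancel₀ hR0.ne'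
  have hδε : δ * R * (3^k * N^k) ≤ ε/4 := by
    have h1 : δ ≤ ε/(4 * 3^k * N^k * R) := le_trans (min_le_right _ _) (min_le_right _ _)
    have hpos : (0:ℝ) ≤ 3^k * N^k := by positivity
    have h4 : (ε/(4 * 3^k * N^k * R)) * R * (3^k * N^k) = ε/4 := by
      field_simp
    calc δ * R * (3^k * N^k) ≤ (ε/(4 * 3^k * N^k * R)) * R * (3^k * N^k) :=
          mul_le_mul_of_nonneg_right (mul_le_mul_of_nonneg_right h1 hR0.le) hpos
    _ = ε/4 := h4
  have hT0N : ∀ x : X, ‖T₀ x‖ ≤ N * ‖x‖ := fun x =>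
    (T₀.le_opNorm x).trans (by nlinarith [norm_nonneg x])
  have hdiff : ∀ x : X, ‖T x - T₀ x‖ ≤ δ * ‖x‖ := by
    intro x
    have h1 := (T - T₀).le_opNorm x
    rw [ContinuousLinearMap.sub_apply] at h1
    nlinarith [norm_nonneg x]
  have hTN : ∀ x : X, ‖T x‖ ≤ N * ‖x‖ := by
    intro x
    have h1 : ‖T x‖ ≤ ‖T₀ x‖ + ‖T x - T₀ x‖ := by
      calc ‖T x‖ = ‖T₀ x + (T x - T₀ x)‖ := by rw [add_sub_cancel]
      _ ≤ ‖T₀ x‖ + ‖T x - T₀ x‖ := norm_add_le _ _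
    have h2 := hdiff x
    have h3 := T₀.le_opNorm x
    have h4 : δ * ‖x‖ ≤ 1 * ‖x‖ := mul_le_mul_of_nonneg_right hδ1 (norm_nonneg x)
    simp only [hNdef]
    nlinarith [norm_nonneg x]
  have key : ∀ A B : X →L[ℝ] X, (∀ x, ‖A x‖ ≤ N * ‖x‖) → (∀ x, ‖B x‖ ≤ N * ‖x‖) →
      (∀ x, ‖A x - B x‖ ≤ δ * ‖x‖) →
      ∀ V : Submodule ℝ X, Module.rank ℝ V = (k : Cardinal) →
        subdet A V ≤ subdet B V + ε/2 := by
    intro A B hA hB hAB V hV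
    haveI : FiniteDimensional ℝ V := Module.finite_of_rank_eq_nat hV
    have hfr : Module.finrank ℝ V = k := Module.finrank_eq_of_rank_eq hV
    letI : MeasurableSpace V := borel V
    haveI : BorelSpace V := ⟨rfl⟩
    rw [subdet_eq_ratio A V ((Module.finBasis ℝ V).addHaar),
      subdet_eq_ratio B V ((Module.finBasis ℝ V).addHaar)]
    have hA' : ∀ v : V, ‖(A.comp V.subtypeL) v‖ ≤ N * ‖v‖ := by
      intro v
      have := hA (v : X)
      simpa [ContinuousLinearMap.comp_apply, Submodule.subtypeL_apply,
        Submodule.coe_norm] using this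
    have hB' : ∀ v : V, ‖(B.comp V.subtypeL) v‖ ≤ N * ‖v‖ := by
      intro v
      have := hB (v : X)
      simpa [ContinuousLinearMap.comp_apply, Submodule.subtypeL_apply,
        Submodule.coe_norm] using this
    have hAB' : ∀ v : V, ‖(A.comp V.subtypeL) v - (B.comp V.subtypeL) v‖ ≤ δ * ‖v‖ := by
      intro v
      have := hAB (v : X)
      simpa [ContinuousLinearMap.comp_apply, Submodule.subtypeL_apply,
        Submodule.coe_norm] using this
    have hcomp := d_comparison ((Module.finBasis ℝ V).addHaar)
      (A.comp V.subtypeL) (B.comp V.subtypeL) hN1 hR1 hδ0.le hδR hA' hB' hAB'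
    rw [← hfr] at hterm3 hδε
    have hpow : ((1 + δ*R)^(Module.finrank ℝ V) - 1) * N^(Module.finrank ℝ V) ≤ ε/4 := by
      have hp := pow_one_add_le (t := δ*R) (by positivity) hδR (Module.finrank ℝ V)
      have hNk : (0:ℝ) ≤ N^(Module.finrank ℝ V) := by positivity
      have h3k : (0:ℝ) ≤ 3^(Module.finrank ℝ V) := by positivity
      have h5 : ((1 + δ*R)^(Module.finrank ℝ V) - 1) * N^(Module.finrank ℝ V) ≤
          (δ*R * 3^(Module.finrank ℝ V)) * N^(Module.finrank ℝ V) :=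
        mul_le_mul_of_nonneg_right (by linarith) hNk
      calc ((1 + δ*R)^(Module.finrank ℝ V) - 1) * N^(Module.finrank ℝ V)
          ≤ (δ*R * 3^(Module.finrank ℝ V)) * N^(Module.finrank ℝ V) := h5
      _ = δ * R * (3^(Module.finrank ℝ V) * N^(Module.finrank ℝ V)) := by ring
      _ ≤ ε/4 := hδε
    linarith
  have h1 : volGrowth T k ≤ volGrowth T₀ k + ε/2 :=
    volGrowth_le_of_pointwise (by linarith) (key T T₀ hTN hT0N hdiff)
  have h2 : volGrowth T₀ k ≤ volGrowth T k + ε/2 :=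
    volGrowth_le_of_pointwise (by linarith) (key T₀ T hT0N hTN (fun x => by
      rw [norm_sub_rev]; exact hdiff x))
  have habs : |volGrowth T k - volGrowth T₀ k| ≤ ε/2 :=
    abs_le.2 ⟨by linarith, by linarith⟩
  linarith [half_lt_self hε]

end Cont






end QCDS


namespace QCDS

/-- **Continuity and submultiplicativity of the volume growth.** For `k ≤ dim X`, the map
`T ↦ V_k(T)` is continuous on `B(X)` for the operator norm topology and is submultiplicative:
`V_k(T ∘ S) ≤ V_k(T) V_k(S)`. -/
theorem volGrowth_continuous_and_submultiplicative
    {X : Type*} [NormedAddCommGroup X] [NormedSpace ℝ X] [CompleteSpace X]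
    (k : ℕ) (hk : (k : Cardinal) ≤ Module.rank ℝ X) :
    Continuous (fun T : X →L[ℝ] X => volGrowth T k) ∧
    ∀ T S : X →L[ℝ] X, volGrowth (T.comp S) k ≤ volGrowth T k * volGrowth S k :=
  ⟨volGrowth_continuous k, fun T S => volGrowth_submul T S k⟩

end QCDS
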